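/- For every θ ∈ [0, π]: if r ∈ ℛ⁻ with r > 0, then Σ_{j=1}^{4} 2^{2(r−j)}·a_j⁻·(2cos θ)^{2j} ≤ (4cos²θ)^r; and if r ∈ ℛ⁺, then Σ_{j=1}^{4} 2^{2(r−j)}·a_j⁻·(2cos θ)^{2j} ≥ (4cos²θ)^r. -/

import Mathlib

noncomputable section

open Real Filter

def P1m (r κ η : ℝ) : ℝ := ((4 - r) * κ + (r - 2) * η) * κ ^ (r - 1) * η ^ 2

def P2m (r κ η : ℝ) : ℝ :=
  ((2 * r - 8) * κ ^ 2 + (1 - r) * κ * η + (1 - r) * η ^ 2) * κ ^ (r - 2) * η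

def P3m (r κ η : ℝ) : ℝ :=
  ((4 - r) * κ ^ 2 + (4 - r) * κ * η + 2 * (r - 1) * η ^ 2) * κ ^ (r - 2)

def P4m (r κ η : ℝ) : ℝ := ((r - 3) * κ + (1 - r) * η) * κ ^ (r - 2)

/-- `κ₋ = 1/4`. -/
def κm : ℝ := 1 / 4

/-- `η₋ = 3/4`. -/
def ηm : ℝ := 3 / 4

def a1m (r : ℝ) : ℝ := (P1m r κm ηm - P1m r ηm κm) / (κm - ηm) ^ 3

def a2m (r : ℝ) : ℝ := (P2m r κm ηm - P2m r ηm κm) / (κm - ηm) ^ 3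

def a3m (r : ℝ) : ℝ := (P3m r κm ηm - P3m r ηm κm) / (κm - ηm) ^ 3

def a4m (r : ℝ) : ℝ := (P4m r κm ηm - P4m r ηm κm) / (κm - ηm) ^ 3

/-- `ℛ⁻ = (0,1] ∪ [2,3] ∪ [4,∞)`. -/
def Rminus : Set ℝ := Set.Ioc 0 1 ∪ Set.Icc 2 3 ∪ Set.Ici 4

/-- `ℛ⁺ = [1,2] ∪ [3,4]`. -/
def Rplus : Set ℝ := Set.Icc 1 2 ∪ Set.Icc 3 4

def FF (r b1 b2 b3 b4 b5 x : ℝ) : ℝ :=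
  x ^ r - (b1*x + b2*x^2 + b3*x^3 + b4*x^4 + b5*x^5)
def FF1 (r b1 b2 b3 b4 b5 x : ℝ) : ℝ :=
  r * x ^ (r-1) - (b1 + 2*b2*x + 3*b3*x^2 + 4*b4*x^3 + 5*b5*x^4)
def FF2 (r b1 b2 b3 b4 b5 x : ℝ) : ℝ :=
  r*(r-1) * x ^ (r-2) - (2*b2 + 6*b3*x + 12*b4*x^2 + 20*b5*x^3)
def FF3 (r b1 b2 b3 b4 b5 x : ℝ) : ℝ :=
  r*(r-1)*(r-2) * x ^ (r-3) - (6*b3 + 24*b4*x + 60*b5*x^2)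
def FF4 (r b1 b2 b3 b4 b5 x : ℝ) : ℝ :=
  r*(r-1)*(r-2)*(r-3) * x ^ (r-4) - (24*b4 + 120*b5*x)
def FF5 (r b1 b2 b3 b4 b5 x : ℝ) : ℝ :=
  r*(r-1)*(r-2)*(r-3)*(r-4) * x ^ (r-5) - 120*b5

variable {r b1 b2 b3 b4 b5 : ℝ}

lemma rpow_hda (s : ℝ) {x : ℝ} (hx : x ≠ 0) :
    HasDerivAt (fun y : ℝ => y ^ s) (s * x ^ (s-1)) x :=
  Real.hasDerivAt_rpow_const (Or.inl hx)


lemma hdFF {x : ℝ} (hx : 0 < x) :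
    HasDerivAt (FF r b1 b2 b3 b4 b5) (FF1 r b1 b2 b3 b4 b5 x) x := by
  unfold FF FF1
  have h := (rpow_hda r hx.ne').sub
    (((hasDerivAt_id x).const_mul b1).add
      (((((hasDerivAt_pow 2 x).const_mul b2).add
        ((hasDerivAt_pow 3 x).const_mul b3)).add
        ((hasDerivAt_pow 4 x).const_mul b4)).add
        ((hasDerivAt_pow 5 x).const_mul b5)))
  convert h using 1
  all_goals (try funext y) <;> (try simp only [id_eq]) <;> push_cast <;> norm_num <;> try ring
  all_goals rfl


lemma hdFF1 {x : ℝ} (hx : 0 < x) :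
    HasDerivAt (FF1 r b1 b2 b3 b4 b5) (FF2 r b1 b2 b3 b4 b5 x) x := by
  unfold FF1 FF2
  have h := ((rpow_hda (r-1) hx.ne').const_mul r).sub
    (((hasDerivAt_const x b1).add ((hasDerivAt_id x).const_mul (2*b2))).add
      (((hasDerivAt_pow 2 x).const_mul (3*b3)).add
        (((hasDerivAt_pow 3 x).const_mul (4*b4)).add
          ((hasDerivAt_pow 4 x).const_mul (5*b5)))))
  convert h using 1
  all_goals (try funext y) <;> (try simp only [id_eq]) <;> push_cast <;> norm_num <;> try ring
  all_goals rfl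


lemma hdFF2 {x : ℝ} (hx : 0 < x) :
    HasDerivAt (FF2 r b1 b2 b3 b4 b5) (FF3 r b1 b2 b3 b4 b5 x) x := by
  unfold FF2 FF3
  have h := ((rpow_hda (r-2) hx.ne').const_mul (r*(r-1))).sub
    (((hasDerivAt_const x (2*b2)).add ((hasDerivAt_id x).const_mul (6*b3))).add
      (((hasDerivAt_pow 2 x).const_mul (12*b4)).add
        ((hasDerivAt_pow 3 x).const_mul (20*b5))))
  convert h using 1
  all_goals (try funext y) <;> (try simp only [id_eq]) <;> push_cast <;> norm_num <;> try ring
  all_goals rfl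


lemma hdFF3 {x : ℝ} (hx : 0 < x) :
    HasDerivAt (FF3 r b1 b2 b3 b4 b5) (FF4 r b1 b2 b3 b4 b5 x) x := by
  unfold FF3 FF4
  have h := ((rpow_hda (r-3) hx.ne').const_mul (r*(r-1)*(r-2))).sub
    (((hasDerivAt_const x (6*b3)).add ((hasDerivAt_id x).const_mul (24*b4))).add
      ((hasDerivAt_pow 2 x).const_mul (60*b5)))
  convert h using 1
  all_goals (try funext y) <;> (try simp only [id_eq]) <;> push_cast <;> norm_num <;> try ring
  all_goals rfl


lemma hdFF4 {x : ℝ} (hx : 0 < x) :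
    HasDerivAt (FF4 r b1 b2 b3 b4 b5) (FF5 r b1 b2 b3 b4 b5 x) x := by
  unfold FF4 FF5
  have h := ((rpow_hda (r-4) hx.ne').const_mul (r*(r-1)*(r-2)*(r-3))).sub
    ((hasDerivAt_const x (24*b4)).add ((hasDerivAt_id x).const_mul (120*b5)))
  convert h using 1
  all_goals (try funext y) <;> (try simp only [id_eq]) <;> push_cast <;> norm_num <;> try ring
  all_goals rfl

lemma step {f f' : ℝ → ℝ} (hd : ∀ x, 0 < x → HasDerivAt f (f' x) x)
    {a b : ℝ} (ha : 0 < a) (hab : a < b) (hfa : f a = 0) (hfb : f b = 0) :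
    ∃ c, a < c ∧ c < b ∧ f' c = 0 := by
  have hc : ContinuousOn f (Set.Icc a b) := fun x hx =>
    ((hd x (ha.trans_le hx.1)).continuousAt).continuousWithinAt
  obtain ⟨c, hc1, hc2⟩ := exists_hasDerivAt_eq_zero hab hc (hfa.trans hfb.symm)
    (fun x hx => hd x (ha.trans hx.1))
  exact ⟨c, hc1.1, hc1.2, hc2⟩

lemma step0 {f f' : ℝ → ℝ} (hd : ∀ x, 0 < x → HasDerivAt f (f' x) x)
    (hcont : ContinuousOn f (Set.Icc 0 1)) {b : ℝ} (hb : 0 < b) (hb1 : b ≤ 1)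
    (hfa : f 0 = 0) (hfb : f b = 0) :
    ∃ c, 0 < c ∧ c < b ∧ f' c = 0 := by
  have hc : ContinuousOn f (Set.Icc 0 b) :=
    hcont.mono (Set.Icc_subset_Icc le_rfl hb1)
  obtain ⟨c, hc1, hc2⟩ := exists_hasDerivAt_eq_zero hb hc (hfa.trans hfb.symm)
    (fun x hx => hd x hx.1)
  exact ⟨c, hc1.1, hc1.2, hc2⟩

/-- from five ordered positive zeros of `FF1`, get a positive zero of `FF5`. -/
lemma chain {r b1 b2 b3 b4 b5 : ℝ} {u1 u2 u3 u4 u5 : ℝ}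
    (h0 : 0 < u1) (h12 : u1 < u2) (h23 : u2 < u3) (h34 : u3 < u4) (h45 : u4 < u5)
    (z1 : FF1 r b1 b2 b3 b4 b5 u1 = 0) (z2 : FF1 r b1 b2 b3 b4 b5 u2 = 0)
    (z3 : FF1 r b1 b2 b3 b4 b5 u3 = 0) (z4 : FF1 r b1 b2 b3 b4 b5 u4 = 0)
    (z5 : FF1 r b1 b2 b3 b4 b5 u5 = 0) :
    ∃ c, 0 < c ∧ FF5 r b1 b2 b3 b4 b5 c = 0 := by
  obtain ⟨v1, hv1a, hv1b, hv1⟩ := step (fun x hx => hdFF1 hx) h0 h12 z1 z2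
  obtain ⟨v2, hv2a, hv2b, hv2⟩ := step (fun x hx => hdFF1 hx) (h0.trans h12) h23 z2 z3
  obtain ⟨v3, hv3a, hv3b, hv3⟩ := step (fun x hx => hdFF1 hx) ((h0.trans h12).trans h23) h34 z3 z4
  obtain ⟨v4, hv4a, hv4b, hv4⟩ := step (fun x hx => hdFF1 hx) (((h0.trans h12).trans h23).trans h34) h45 z4 z5
  have hv1pos : 0 < v1 := h0.trans hv1a
  obtain ⟨w1, hw1a, hw1b, hw1⟩ := step (fun x hx => hdFF2 hx) hv1pos (hv1b.trans (hv2a.trans_le le_rfl)) hv1 hv2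
  obtain ⟨w2, hw2a, hw2b, hw2⟩ := step (fun x hx => hdFF2 hx) (hv1pos.trans (hv1b.trans hv2a)) (hv2b.trans hv3a) hv2 hv3
  obtain ⟨w3, hw3a, hw3b, hw3⟩ := step (fun x hx => hdFF2 hx) (hv1pos.trans ((hv1b.trans hv2a).trans (hv2b.trans hv3a))) (hv3b.trans hv4a) hv3 hv4
  have hw1pos : 0 < w1 := hv1pos.trans hw1a
  obtain ⟨s1, hs1a, hs1b, hs1⟩ := step (fun x hx => hdFF3 hx) hw1pos (hw1b.trans hw2a) hw1 hw2
  obtain ⟨s2, hs2a, hs2b, hs2⟩ := step (fun x hx => hdFF3 hx) (hw1pos.trans (hw1b.trans hw2a)) (hw2b.trans hw3a) hw2 hw3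
  have hs1pos : 0 < s1 := hw1pos.trans hs1a
  obtain ⟨t1, ht1a, ht1b, ht1⟩ := step (fun x hx => hdFF4 hx) hs1pos (hs1b.trans hs2a) hs1 hs2
  exact ⟨t1, hs1pos.trans ht1a, ht1⟩

lemma rp1 {x : ℝ} (hx : 0 < x) (r : ℝ) : x ^ (r-1) = x ^ r / x := by
  rw [Real.rpow_sub hx, Real.rpow_one]

lemma rp2 {x : ℝ} (hx : 0 < x) (r : ℝ) : x ^ (r-2) = x ^ r / x ^ (2:ℕ) := by
  rw [Real.rpow_sub hx, ← Real.rpow_natCast x 2]; norm_num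

lemma a1m_eq (r : ℝ) :
    a1m r = -9*(r-1) * (1/4:ℝ)^r + (5-r)/3 * (3/4:ℝ)^r := by
  simp only [a1m, P1m, κm, ηm, rp1 (by norm_num : (0:ℝ) < 1/4), rp1 (by norm_num : (0:ℝ) < 3/4)]
  ring

lemma a2m_eq (r : ℝ) :
    a2m r = (60*r-24) * (1/4:ℝ)^r + (28*r-136)/9 * (3/4:ℝ)^r := by
  simp only [a2m, P2m, κm, ηm, rp2 (by norm_num : (0:ℝ) < 1/4), rp2 (by norm_num : (0:ℝ) < 3/4)]
  ring

lemma a3m_eq (r : ℝ) :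
    a3m r = (16-112*r) * (1/4:ℝ)^r + (368-80*r)/9 * (3/4:ℝ)^r := by
  simp only [a3m, P3m, κm, ηm, rp2 (by norm_num : (0:ℝ) < 1/4), rp2 (by norm_num : (0:ℝ) < 3/4)]
  ring

lemma a4m_eq (r : ℝ) :
    a4m r = 64*r * (1/4:ℝ)^r + (64*r-256)/9 * (3/4:ℝ)^r := by
  simp only [a4m, P4m, κm, ηm, rp2 (by norm_num : (0:ℝ) < 1/4), rp2 (by norm_num : (0:ℝ) < 3/4)]
  ring

/-- abbreviation for the quartic -/
def Q (r x : ℝ) : ℝ := a1m r * x + a2m r * x^2 + a3m r * x^3 + a4m r * x^4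

set_option maxHeartbeats 2000000 in
lemma core {r x0 lam : ℝ} (hr : 0 < r) (hx0 : 0 < x0) (hx1 : x0 ≤ 1)
    (hk : x0 ≠ 1/4) (he : x0 ≠ 3/4)
    (hlam : x0 ^ r - Q r x0 = lam * (x0 * (x0 - 1/4)^2 * (x0 - 3/4)^2)) :
    ∃ c, 0 < c ∧ r*(r-1)*(r-2)*(r-3)*(r-4) * c ^ (r-5) = 120 * lam := by
  set b1 : ℝ := a1m r + lam * (9/256) with hb1
  set b2 : ℝ := a2m r - lam * (3/8) with hb2
  set b3 : ℝ := a3m r + lam * (11/8) with hb3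
  set b4 : ℝ := a4m r - lam * 2 with hb4
  set b5 : ℝ := lam with hb5
  have hF : ∀ x : ℝ, FF r b1 b2 b3 b4 b5 x
      = (x ^ r - Q r x) - lam * (x * (x - 1/4)^2 * (x - 3/4)^2) := by
    intro x; unfold FF Q; rw [hb1, hb2, hb3, hb4, hb5]; ring
  have hK := a1m_eq r; have hK2 := a2m_eq r; have hK3 := a3m_eq r; have hK4 := a4m_eq r
  have h14 : (0:ℝ) < 1/4 := by norm_num
  have h34 : (0:ℝ) < 3/4 := by norm_num
  -- zero of F at 0
  have hF0 : FF r b1 b2 b3 b4 b5 0 = 0 := by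
    unfold FF; rw [Real.zero_rpow hr.ne']; ring
  -- zeros of F at 1/4 and 3/4
  have hFk : FF r b1 b2 b3 b4 b5 (1/4) = 0 := by
    rw [hF]; unfold Q; rw [hK, hK2, hK3, hK4]; ring
  have hFe : FF r b1 b2 b3 b4 b5 (3/4) = 0 := by
    rw [hF]; unfold Q; rw [hK, hK2, hK3, hK4]; ring
  -- zero of F at x0
  have hFx : FF r b1 b2 b3 b4 b5 x0 = 0 := by rw [hF, hlam]; ring
  -- zeros of F1 at 1/4 and 3/4
  have hF1k : FF1 r b1 b2 b3 b4 b5 (1/4) = 0 := by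
    unfold FF1
    rw [rp1 h14, hb1, hb2, hb3, hb4, hb5, hK, hK2, hK3, hK4]
    ring
  have hF1e : FF1 r b1 b2 b3 b4 b5 (3/4) = 0 := by
    unfold FF1
    rw [rp1 h34, hb1, hb2, hb3, hb4, hb5, hK, hK2, hK3, hK4]
    ring
  -- continuity of F on [0,1]
  have hcont : ContinuousOn (FF r b1 b2 b3 b4 b5) (Set.Icc 0 1) := by
    apply Continuous.continuousOn
    unfold FF
    exact (Real.continuous_rpow_const hr.le).sub (by continuity)
  have hd : ∀ x : ℝ, 0 < x → HasDerivAt (FF r b1 b2 b3 b4 b5) (FF1 r b1 b2 b3 b4 b5 x) x :=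
    fun x hx => hdFF hx
  -- build five ordered zeros of FF1, by cases on position of x0
  have h1434 : (1/4:ℝ) < 3/4 := by norm_num
  have main : ∃ c, 0 < c ∧ FF5 r b1 b2 b3 b4 b5 c = 0 := by
    rcases lt_trichotomy x0 (1/4) with hc1 | hc1 | hc1
    · -- 0 < x0 < 1/4 < 3/4
      obtain ⟨t1, ht1a, ht1b, ht1⟩ := step0 hd hcont hx0 hx1 hF0 hFx
      obtain ⟨t2, ht2a, ht2b, ht2⟩ := step hd hx0 hc1 hFx hFk
      obtain ⟨t3, ht3a, ht3b, ht3⟩ := step hd h14 h1434 hFk hFe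
      exact chain ht1a (ht1b.trans ht2a) ht2b ht3a ht3b ht1 ht2 hF1k ht3 hF1e
    · exact absurd hc1 hk
    · rcases lt_trichotomy x0 (3/4) with hc2 | hc2 | hc2
      · -- 0 < 1/4 < x0 < 3/4
        obtain ⟨t1, ht1a, ht1b, ht1⟩ := step0 hd hcont h14 (by norm_num) hF0 hFk
        obtain ⟨t2, ht2a, ht2b, ht2⟩ := step hd h14 hc1 hFk hFx
        obtain ⟨t3, ht3a, ht3b, ht3⟩ := step hd (h14.trans hc1) hc2 hFx hFe
        exact chain ht1a ht1b ht2a (ht2b.trans ht3a) ht3b ht1 hF1k ht2 ht3 hF1e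
      · exact absurd hc2 he
      · -- 0 < 1/4 < 3/4 < x0
        obtain ⟨t1, ht1a, ht1b, ht1⟩ := step0 hd hcont h14 (by norm_num) hF0 hFk
        obtain ⟨t2, ht2a, ht2b, ht2⟩ := step hd h14 h1434 hFk hFe
        obtain ⟨t3, ht3a, ht3b, ht3⟩ := step hd h34 hc2 hFe hFx
        exact chain ht1a ht1b ht2a ht2b ht3a ht1 hF1k ht2 hF1e ht3
  obtain ⟨c, hc, h5⟩ := main
  refine ⟨c, hc, ?_⟩
  unfold FF5 at h5
  rw [hb5] at h5
  linarith

lemma Qk (r : ℝ) : Q r (1/4) = (1/4:ℝ) ^ r := by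
  unfold Q; rw [a1m_eq, a2m_eq, a3m_eq, a4m_eq]; ring

lemma Qe (r : ℝ) : Q r (3/4) = (3/4:ℝ) ^ r := by
  unfold Q; rw [a1m_eq, a2m_eq, a3m_eq, a4m_eq]; ring

lemma g_le {r : ℝ} (hr : 0 < r) (hc : 0 ≤ r*(r-1)*(r-2)*(r-3)*(r-4)) :
    ∀ x : ℝ, 0 ≤ x → x ≤ 1 → Q r x ≤ x ^ r := by
  intro x hx0 hx1
  by_contra hcon
  push_neg at hcon
  rcases eq_or_lt_of_le hx0 with h0 | h0
  · rw [← h0, Real.zero_rpow hr.ne'] at hcon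
    unfold Q at hcon; norm_num at hcon
  have hk : x ≠ 1/4 := by rintro rfl; rw [Qk] at hcon; exact lt_irrefl _ hcon
  have he : x ≠ 3/4 := by rintro rfl; rw [Qe] at hcon; exact lt_irrefl _ hcon
  have hw : 0 < x * (x - 1/4)^2 * (x - 3/4)^2 :=
    mul_pos (mul_pos h0 (pow_two_pos_of_ne_zero (sub_ne_zero.mpr hk)))
      (pow_two_pos_of_ne_zero (sub_ne_zero.mpr he))
  set lam : ℝ := (x ^ r - Q r x) / (x * (x - 1/4)^2 * (x - 3/4)^2) with hlamdef
  have hlam : x ^ r - Q r x = lam * (x * (x - 1/4)^2 * (x - 3/4)^2) := by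
    rw [hlamdef, div_mul_cancel₀ _ hw.ne']
  obtain ⟨c, hcpos, hceq⟩ := core hr h0 hx1 hk he hlam
  have hlneg : lam < 0 := div_neg_of_neg_of_pos (by linarith) hw
  have hge : 0 ≤ r*(r-1)*(r-2)*(r-3)*(r-4) * c ^ (r-5) :=
    mul_nonneg hc (Real.rpow_pos_of_pos hcpos _).le
  linarith

lemma g_ge {r : ℝ} (hr : 0 < r) (hc : r*(r-1)*(r-2)*(r-3)*(r-4) ≤ 0) :
    ∀ x : ℝ, 0 ≤ x → x ≤ 1 → x ^ r ≤ Q r x := by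
  intro x hx0 hx1
  by_contra hcon
  push_neg at hcon
  rcases eq_or_lt_of_le hx0 with h0 | h0
  · rw [← h0, Real.zero_rpow hr.ne'] at hcon
    unfold Q at hcon; norm_num at hcon
  have hk : x ≠ 1/4 := by rintro rfl; rw [Qk] at hcon; exact lt_irrefl _ hcon
  have he : x ≠ 3/4 := by rintro rfl; rw [Qe] at hcon; exact lt_irrefl _ hcon
  have hw : 0 < x * (x - 1/4)^2 * (x - 3/4)^2 :=
    mul_pos (mul_pos h0 (pow_two_pos_of_ne_zero (sub_ne_zero.mpr hk)))
      (pow_two_pos_of_ne_zero (sub_ne_zero.mpr he))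
  set lam : ℝ := (x ^ r - Q r x) / (x * (x - 1/4)^2 * (x - 3/4)^2) with hlamdef
  have hlam : x ^ r - Q r x = lam * (x * (x - 1/4)^2 * (x - 3/4)^2) := by
    rw [hlamdef, div_mul_cancel₀ _ hw.ne']
  obtain ⟨c, hcpos, hceq⟩ := core hr h0 hx1 hk he hlam
  have hlpos : 0 < lam := div_pos (by linarith) hw
  have hge : r*(r-1)*(r-2)*(r-3)*(r-4) * c ^ (r-5) ≤ 0 :=
    mul_nonpos_of_nonpos_of_nonneg hc (Real.rpow_pos_of_pos hcpos _).le
  linarith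

lemma prod_nonneg_of_Rminus {r : ℝ} (h : r ∈ Rminus) (hr : 0 < r) :
    0 ≤ r*(r-1)*(r-2)*(r-3)*(r-4) := by
  rcases h with (h | h) | h
  · have e : r*(r-1)*(r-2)*(r-3)*(r-4) = r*(1-r)*(2-r)*(3-r)*(4-r) := by ring
    rw [e]
    have h1 : (0:ℝ) ≤ 1 - r := by linarith [h.2]
    exact mul_nonneg (mul_nonneg (mul_nonneg (mul_nonneg hr.le h1) (by linarith)) (by linarith)) (by linarith)
  · have e : r*(r-1)*(r-2)*(r-3)*(r-4) = r*(r-1)*(r-2)*(3-r)*(4-r) := by ring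
    rw [e]
    obtain ⟨h2, h3⟩ := h
    exact mul_nonneg (mul_nonneg (mul_nonneg (mul_nonneg hr.le (by linarith)) (by linarith)) (by linarith)) (by linarith)
  · have h4 : (4:ℝ) ≤ r := h
    exact mul_nonneg (mul_nonneg (mul_nonneg (mul_nonneg hr.le (by linarith)) (by linarith)) (by linarith)) (by linarith)

lemma prod_nonpos_of_Rplus {r : ℝ} (h : r ∈ Rplus) :
    r*(r-1)*(r-2)*(r-3)*(r-4) ≤ 0 := by
  rcases h with h | h <;> obtain ⟨ha, hb⟩ := h
  · have e : r*(r-1)*(r-2)*(r-3)*(r-4) = -(r*(r-1)*(2-r)*(3-r)*(4-r)) := by ring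
    rw [e, neg_nonpos]
    exact mul_nonneg (mul_nonneg (mul_nonneg (mul_nonneg (by linarith) (by linarith)) (by linarith)) (by linarith)) (by linarith)
  · have e : r*(r-1)*(r-2)*(r-3)*(r-4) = -(r*(r-1)*(r-2)*(r-3)*(4-r)) := by ring
    rw [e, neg_nonpos]
    exact mul_nonneg (mul_nonneg (mul_nonneg (mul_nonneg (by linarith) (by linarith)) (by linarith)) (by linarith)) (by linarith)

lemma two_rpow_two : (2:ℝ) ^ (2:ℝ) = 4 := by
  norm_cast

lemma two_rpow_four : (2:ℝ) ^ (4:ℝ) = 16 := by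
  norm_cast

lemma two_rpow_six : (2:ℝ) ^ (6:ℝ) = 64 := by
  norm_cast

lemma two_rpow_eight : (2:ℝ) ^ (8:ℝ) = 256 := by
  norm_cast

/-- Pointwise comparison in Rankin's method: for `θ ∈ [0, π]`,
`Σ_{j=1}^{4} 2^{2(r−j)}·a_j⁻·(2cos θ)^{2j}` is at most `(4cos²θ)^r` when `r ∈ ℛ⁻`
and at least `(4cos²θ)^r` when `r ∈ ℛ⁺`. -/
theorem pointwise_comparison_minus (θ r : ℝ) (hθ : θ ∈ Set.Icc 0 π) :
    (r ∈ Rminus → 0 < r →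
      (2 : ℝ) ^ (2 * (r - 1)) * a1m r * (2 * Real.cos θ) ^ 2
          + (2 : ℝ) ^ (2 * (r - 2)) * a2m r * (2 * Real.cos θ) ^ 4
          + (2 : ℝ) ^ (2 * (r - 3)) * a3m r * (2 * Real.cos θ) ^ 6
          + (2 : ℝ) ^ (2 * (r - 4)) * a4m r * (2 * Real.cos θ) ^ 8
        ≤ (4 * Real.cos θ ^ 2) ^ r) ∧
    (r ∈ Rplus →
      (4 * Real.cos θ ^ 2) ^ r
        ≤ (2 : ℝ) ^ (2 * (r - 1)) * a1m r * (2 * Real.cos θ) ^ 2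
            + (2 : ℝ) ^ (2 * (r - 2)) * a2m r * (2 * Real.cos θ) ^ 4
            + (2 : ℝ) ^ (2 * (r - 3)) * a3m r * (2 * Real.cos θ) ^ 6
            + (2 : ℝ) ^ (2 * (r - 4)) * a4m r * (2 * Real.cos θ) ^ 8) := by
  have h2 : (0:ℝ) < 2 := two_pos
  have hx0 : (0:ℝ) ≤ Real.cos θ ^ 2 := sq_nonneg _
  have hx1 : Real.cos θ ^ 2 ≤ 1 := Real.cos_sq_le_one θ
  have hT : (0:ℝ) < (2:ℝ) ^ (2*r) := Real.rpow_pos_of_pos h2 _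
  have e1 : (2:ℝ) ^ (2*(r-1)) = (2:ℝ)^(2*r) / 4 := by
    rw [show 2*(r-1) = 2*r - 2 by ring, Real.rpow_sub h2, two_rpow_two]
  have e2 : (2:ℝ) ^ (2*(r-2)) = (2:ℝ)^(2*r) / 16 := by
    rw [show 2*(r-2) = 2*r - 4 by ring, Real.rpow_sub h2, two_rpow_four]
  have e3 : (2:ℝ) ^ (2*(r-3)) = (2:ℝ)^(2*r) / 64 := by
    rw [show 2*(r-3) = 2*r - 6 by ring, Real.rpow_sub h2, two_rpow_six]
  have e4 : (2:ℝ) ^ (2*(r-4)) = (2:ℝ)^(2*r) / 256 := by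
    rw [show 2*(r-4) = 2*r - 8 by ring, Real.rpow_sub h2, two_rpow_eight]
  have eL : (2 : ℝ) ^ (2 * (r - 1)) * a1m r * (2 * Real.cos θ) ^ 2
          + (2 : ℝ) ^ (2 * (r - 2)) * a2m r * (2 * Real.cos θ) ^ 4
          + (2 : ℝ) ^ (2 * (r - 3)) * a3m r * (2 * Real.cos θ) ^ 6
          + (2 : ℝ) ^ (2 * (r - 4)) * a4m r * (2 * Real.cos θ) ^ 8
      = (2:ℝ)^(2*r) * Q r (Real.cos θ ^ 2) := by
    rw [e1, e2, e3, e4]; unfold Q; ring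
  have eR : (4 * Real.cos θ ^ 2) ^ r = (2:ℝ)^(2*r) * (Real.cos θ ^ 2) ^ r := by
    rw [Real.mul_rpow (by norm_num) hx0]
    congr 1
    rw [Real.rpow_mul h2.le, two_rpow_two]
  constructor
  · intro hm hr
    have hQ := g_le hr (prod_nonneg_of_Rminus hm hr) _ hx0 hx1
    rw [eL, eR]
    exact mul_le_mul_of_nonneg_left hQ hT.le
  · intro hp
    have hr : 0 < r := by
      rcases hp with h | h
      · linarith [h.1]
      · linarith [h.1]
    have hQ := g_ge hr (prod_nonpos_of_Rplus hp) _ hx0 hx1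
    rw [eL, eR]
    exact mul_le_mul_of_nonneg_left hQ hT.le
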